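/- Let λ > 0 and let u be a C^5 function on [0,L] satisfying λu + D^3u − D^5u = 0 on (0,L) together with the boundary conditions u(0) = u(L) = D^2u(L) = 0, D^3u(0) = a_{31} Du(0), D^3u(L) = b_{31} Du(L), where a_{31} < 1/2 and b_{31} > 1/2. Then u is identically zero on [0,L]. -/

import Mathlib

noncomputable def D (L : ℝ) (u : ℝ → ℝ) (i : ℕ) (x : ℝ) : ℝ :=
  iteratedDerivWithin i u (Set.Icc 0 L) x

theorem stmt_7 (L : ℝ) (hL : 0 < L) (lam : ℝ) (hlam : 0 < lam)
    (a31 b31 : ℝ) (ha : a31 < 1 / 2) (hb : 1 / 2 < b31)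
    (u : ℝ → ℝ) (hu : ContDiffOn ℝ 5 u (Set.Icc 0 L))
    (heq : ∀ x ∈ Set.Ioo (0:ℝ) L, lam * u x + D L u 3 x - D L u 5 x = 0)
    (h0 : u 0 = 0) (hLv : u L = 0) (h2L : D L u 2 L = 0)
    (h30 : D L u 3 0 = a31 * D L u 1 0) (h3L : D L u 3 L = b31 * D L u 1 L) :
    ∀ x ∈ Set.Icc (0:ℝ) L, u x = 0 := by
  set s : Set ℝ := Set.Icc 0 L with hs
  have hsu : UniqueDiffOn ℝ s := uniqueDiffOn_Icc hL
  set v : ℕ → ℝ → ℝ := fun i => D L u i with hv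
  have hv0 : ∀ x, v 0 x = u x := fun x => by
    simp [hv, D, iteratedDerivWithin_zero]
  -- continuity of derivatives
  have hcont : ∀ i : ℕ, i ≤ 5 → ContinuousOn (v i) s := by
    intro i hi
    exact hu.continuousOn_iteratedDerivWithin (by exact_mod_cast hi) hsu
  -- derivatives at interior points
  have hderiv : ∀ i : ℕ, i < 5 → ∀ x ∈ Set.Ioo (0:ℝ) L,
      HasDerivAt (v i) (v (i+1) x) x := by
    intro i hi x hx
    have hxs : x ∈ s := Set.mem_Icc.2 ⟨hx.1.le, hx.2.le⟩
    have hdiff : DifferentiableOn ℝ (v i) s :=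
      hu.differentiableOn_iteratedDerivWithin (by exact_mod_cast hi) hsu
    have h1 : HasDerivWithinAt (v i) (derivWithin (v i) s x) s x :=
      (hdiff x hxs).hasDerivWithinAt
    have h2 : v (i+1) x = derivWithin (v i) s x := by
      show iteratedDerivWithin (i+1) u s x = _
      rw [iteratedDerivWithin_succ]
      rfl
    rw [h2]
    exact h1.hasDerivAt (Icc_mem_nhds hx.1 hx.2)
  have hderivu : ∀ x ∈ Set.Ioo (0:ℝ) L, HasDerivAt u (v 1 x) x := by
    intro x hx
    have := hderiv 0 (by norm_num) x hx
    exact this.congr_of_eventuallyEq (Filter.Eventually.of_forall fun y => (hv0 y).symm) |>.congr_deriv rfl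
  -- the energy function
  set G : ℝ → ℝ := fun x =>
    u x * v 4 x - v 1 x * v 3 x + (v 2 x)^2 / 2 - u x * v 2 x + (v 1 x)^2 / 2 with hG
  have hcontu : ContinuousOn u s := hu.continuousOn
  have hGcont : ContinuousOn G s := by
    apply ContinuousOn.add
    apply ContinuousOn.sub
    apply ContinuousOn.add
    apply ContinuousOn.sub
    · exact hcontu.mul (hcont 4 (by norm_num))
    · exact (hcont 1 (by norm_num)).mul (hcont 3 (by norm_num))
    · exact ((hcont 2 (by norm_num)).pow 2).div_const 2
    · exact hcontu.mul (hcont 2 (by norm_num))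
    · exact ((hcont 1 (by norm_num)).pow 2).div_const 2
  have hGderiv : ∀ x ∈ Set.Ioo (0:ℝ) L, HasDerivAt G (lam * (u x)^2) x := by
    intro x hx
    have h1 := hderivu x hx
    have h2 := hderiv 1 (by norm_num) x hx
    have h3 := hderiv 2 (by norm_num) x hx
    have h4 := hderiv 3 (by norm_num) x hx
    have h5 := hderiv 4 (by norm_num) x hx
    have hD := ((((h1.mul h5).sub (h2.mul h4)).add
        (((h3.pow 2).div_const 2))).sub (h1.mul h3)).add ((h2.pow 2).div_const 2)
    have hG' : HasDerivAt G _ x := hD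
    convert hG' using 1
    have hc : lam * u x + v 3 x - v 5 x = 0 := heq x hx
    push_cast
    ring_nf
    linear_combination (u x) * hc
  have hGmono : MonotoneOn G s := by
    apply monotoneOn_of_deriv_nonneg (convex_Icc 0 L) hGcont
    · intro x hx
      rw [interior_Icc] at hx
      exact (hGderiv x hx).differentiableAt.differentiableWithinAt
    · intro x hx
      rw [interior_Icc] at hx
      rw [(hGderiv x hx).deriv]
      positivity
  -- boundary values
  have hG0 : G 0 = (1/2 - a31) * (v 1 0)^2 + (v 2 0)^2 / 2 := by
    have : v 3 0 = a31 * v 1 0 := h30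
    simp only [hG, h0, this]; ring
  have hGL : G L = (1/2 - b31) * (v 1 L)^2 := by
    have h3 : v 3 L = b31 * v 1 L := h3L
    have h2 : v 2 L = 0 := h2L
    simp only [hG, hLv, h3, h2]; ring
  have h0s : (0:ℝ) ∈ s := Set.mem_Icc.2 ⟨le_refl 0, hL.le⟩
  have hLs : L ∈ s := Set.mem_Icc.2 ⟨hL.le, le_refl L⟩
  have hle : G 0 ≤ G L := hGmono h0s hLs hL.le
  have hGLle : G L ≤ 0 := by rw [hGL]; nlinarith [sq_nonneg (v 1 L)]
  have hG0ge : 0 ≤ G 0 := by rw [hG0]; nlinarith [sq_nonneg (v 1 0), sq_nonneg (v 2 0)]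
  have hGzero : ∀ x ∈ s, G x = 0 := by
    intro x hx
    have h1 : G 0 ≤ G x := hGmono h0s hx hx.1
    have h2 : G x ≤ G L := hGmono hx hLs hx.2
    linarith
  -- conclude u = 0 on interior
  have hint : ∀ x ∈ Set.Ioo (0:ℝ) L, u x = 0 := by
    intro x hx
    have hmem : s ∈ nhds x := Icc_mem_nhds hx.1 hx.2
    have hEq : G =ᶠ[nhds x] (fun _ => (0:ℝ)) :=
      Filter.eventually_of_mem hmem fun y hy => hGzero y hy
    have hzero : HasDerivAt G 0 x :=
      (hasDerivAt_const x (0:ℝ)).congr_of_eventuallyEq hEq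
    have := (hGderiv x hx).unique hzero
    have hx2 : (u x)^2 = 0 := by nlinarith [sq_nonneg (u x)]
    exact pow_eq_zero_iff (by norm_num) |>.mp hx2
  intro x hx
  rcases eq_or_lt_of_le hx.1 with h | h
  · rw [← h]; exact h0
  rcases eq_or_lt_of_le hx.2 with h' | h'
  · rw [h']; exact hLv
  exact hint x ⟨h, h'⟩
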